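/- arXiv:0706.2309 — 2 statements merged into one kernel-verified Lean document; each statement's English description precedes it below -/
import Mathlib

section
/- Let f_u, f_v, g_u, g_v, ρ be real numbers with f_u > 0, g_v < 0, f_u·g_v - f_v·g_u > 0, f_u + g_v < 0, and ρ > 0. Define detB = f_u·g_v - f_v·g_u, d_k(γ) = (γ²·detB + γ·ρ·|g_v|)/(ρ·(γ·f_u - ρ)), the symmetry point γ⁽ˢ⁾ = ρ/f_u and d⁽ˢ⁾ = (detB + |f_v·g_u|)/f_u². Then f_v·g_u < 0, and for every real t ≠ 0 one has d_k(γ⁽ˢ⁾ + t) + d_k(γ⁽ˢ⁾ - t) = 2·d⁽ˢ⁾; that is, the curve Λ_k = {(γ, d_k(γ))} is symmetric with respect to the point (γ⁽ˢ⁾, d⁽ˢ⁾). -/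
theorem curve_symmetry (f_u f_v g_u g_v ρ : ℝ)
    (hfu : f_u > 0) (hgv : g_v < 0)
    (hdet : f_u * g_v - f_v * g_u > 0) (htr : f_u + g_v < 0) (hρ : ρ > 0)
    (detB : ℝ) (hdetB : detB = f_u * g_v - f_v * g_u)
    (d_k : ℝ → ℝ)
    (hd_k : ∀ γ, d_k γ = (γ^2 * detB + γ * ρ * |g_v|) / (ρ * (γ * f_u - ρ)))
    (γs ds : ℝ) (hγs : γs = ρ / f_u) (hds : ds = (detB + |f_v * g_u|) / f_u^2) :
    f_v * g_u < 0 ∧ ∀ t : ℝ, t ≠ 0 → d_k (γs + t) + d_k (γs - t) = 2 * ds := by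
  have hfvgu : f_v * g_u < 0 := by nlinarith [mul_pos hfu (neg_pos.mpr hgv)]
  refine ⟨hfvgu, fun t ht => ?_⟩
  have h1 : |g_v| = -g_v := abs_of_neg hgv
  have h2 : |f_v * g_u| = -(f_v * g_u) := abs_of_neg hfvgu
  have hfu' : f_u ≠ 0 := ne_of_gt hfu
  have hρ' : ρ ≠ 0 := ne_of_gt hρ
  have e1 : (γs + t) * f_u - ρ = t * f_u := by rw [hγs]; field_simp; ring
  have e2 : (γs - t) * f_u - ρ = -(t * f_u) := by rw [hγs]; field_simp; ring
  subst hdetB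
  rw [hd_k, hd_k, e1, e2, hds, h1, h2, hγs]
  have htf : t * f_u ≠ 0 := mul_ne_zero ht hfu'
  field_simp
  ring
end

section
/- Let β, α, σ be real numbers with β > 0, α < 0, α + σ < 0, and σ ≥ 0, and set s = √(β/(-α)) and r = √(β/(-(α+σ))). Then the set of nonzero solutions (y₁, y₂) ∈ ℝ² \ {(0,0)} of the system (β + α·y₁² + σ·y₂²)·y₁ = 0 and (β + α·y₂² + σ·y₁²)·y₂ = 0 consists of exactly eight points: (±s, 0), (0, ±s), (r, ±r), and (-r, ±r). -/
theorem eight_steady_states (β α σ : ℝ) (hβ : β > 0) (hα : α < 0)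
    (hασ : α + σ < 0) (hσ : σ ≥ 0)
    (s r : ℝ) (hs : s = Real.sqrt (β / (-α))) (hr : r = Real.sqrt (β / (-(α + σ)))) :
    {p : ℝ × ℝ | p ≠ (0, 0) ∧
        (β + α * p.1^2 + σ * p.2^2) * p.1 = 0 ∧
        (β + α * p.2^2 + σ * p.1^2) * p.2 = 0} =
      {(s, 0), (-s, 0), (0, s), (0, -s), (r, r), (r, -r), (-r, r), (-r, -r)} := by
  have hαne : α ≠ 0 := ne_of_lt hα
  have hασne : α + σ ≠ 0 := ne_of_lt hασ
  have key : ∀ c : ℝ, c ≠ 0 → c * (β / -c) = -β := by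
    intro c hc; field_simp
  have hspos : s > 0 := by
    rw [hs]; apply Real.sqrt_pos.mpr; apply div_pos hβ; linarith
  have hrpos : r > 0 := by
    rw [hr]; apply Real.sqrt_pos.mpr; apply div_pos hβ; linarith
  have hs2 : α * s ^ 2 = -β := by
    rw [hs, Real.sq_sqrt (le_of_lt (div_pos hβ (by linarith : (0:ℝ) < -α)))]
    exact key α hαne
  have hr2 : (α + σ) * r ^ 2 = -β := by
    rw [hr, Real.sq_sqrt (le_of_lt (div_pos hβ (by linarith : (0:ℝ) < -(α + σ))))]
    exact key (α + σ) hασne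
  have hsne : s ≠ 0 := ne_of_gt hspos
  have hrne : r ≠ 0 := ne_of_gt hrpos
  ext ⟨x, y⟩
  simp only [Set.mem_setOf_eq, Set.mem_insert_iff, Set.mem_singleton_iff, ne_eq,
    Prod.mk.injEq]
  constructor
  · rintro ⟨hne, h1, h2⟩
    rcases mul_eq_zero.mp h1 with h1' | hx0
    · rcases mul_eq_zero.mp h2 with h2' | hy0
      · have hxy : (α - σ) * (x ^ 2 - y ^ 2) = 0 := by linear_combination h1' - h2'
        have hx2y2 : x ^ 2 = y ^ 2 := by
          have hne' : α - σ ≠ 0 := by linarith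
          have := (mul_eq_zero.mp hxy).resolve_left hne'
          linarith
        have hx2 : x ^ 2 = r ^ 2 := by
          have h4 : (α + σ) * (x ^ 2 - r ^ 2) = 0 := by
            linear_combination h1' + σ * hx2y2 - hr2
          have := (mul_eq_zero.mp h4).resolve_left hασne
          linarith
        have hxr : x = r ∨ x = -r := sq_eq_sq_iff_eq_or_eq_neg.mp hx2
        have hyx : y = x ∨ y = -x := sq_eq_sq_iff_eq_or_eq_neg.mp hx2y2.symm
        rcases hxr with hx | hx <;> rcases hyx with hy | hy <;> rw [hx] at hy ⊢ <;>
          simp_all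
      · subst hy0
        have hx2 : x ^ 2 = s ^ 2 := by
          have h4 : α * (x ^ 2 - s ^ 2) = 0 := by
            linear_combination h1' - hs2
          have := (mul_eq_zero.mp h4).resolve_left hαne
          linarith
        rcases sq_eq_sq_iff_eq_or_eq_neg.mp hx2 with hx | hx <;> simp [hx]
    · subst hx0
      rcases mul_eq_zero.mp h2 with h2' | hy0
      · have hy2 : y ^ 2 = s ^ 2 := by
          have h4 : α * (y ^ 2 - s ^ 2) = 0 := by
            linear_combination h2' - hs2
          have := (mul_eq_zero.mp h4).resolve_left hαne
          linarith
        rcases sq_eq_sq_iff_eq_or_eq_neg.mp hy2 with hy | hy <;> simp [hy]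
      · exact absurd ⟨rfl, hy0⟩ hne
  · rintro (⟨hx, hy⟩ | ⟨hx, hy⟩ | ⟨hx, hy⟩ | ⟨hx, hy⟩ | ⟨hx, hy⟩ | ⟨hx, hy⟩ |
      ⟨hx, hy⟩ | ⟨hx, hy⟩) <;> rw [hx, hy]
    · exact ⟨by simp [hsne], by linear_combination s * hs2, by ring⟩
    · exact ⟨by simp [hsne], by linear_combination (-s) * hs2, by ring⟩
    · exact ⟨by simp [hsne], by ring, by linear_combination s * hs2⟩
    · exact ⟨by simp [hsne], by ring, by linear_combination (-s) * hs2⟩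
    · exact ⟨by simp [hrne], by linear_combination r * hr2, by linear_combination r * hr2⟩
    · exact ⟨by simp [hrne], by linear_combination r * hr2, by linear_combination (-r) * hr2⟩
    · exact ⟨by simp [hrne], by linear_combination (-r) * hr2, by linear_combination r * hr2⟩
    · exact ⟨by simp [hrne], by linear_combination (-r) * hr2, by linear_combination (-r) * hr2⟩
end
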